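/- (Local augmentation suffices on modular lattices) Let L be a finite modular lattice and I ⊆ L a nonempty order ideal. Then I satisfies the augmentation property (for all I₁, I₂ ∈ I with |I₁| < |I₂| there exists J ∈ I with I₁ < J ≤ I₁ ∨ I₂) if and only if it satisfies the local augmentation property: for all I₁, I₂ ∈ I with |I₁| + 1 = |I₂| and I₂ ⋖ I₁ ∨ I₂, there exists J ∈ I with I₁ < J ≤ I₁ ∨ I₂. -/

import Mathlib

/-- The height of an element: length of a maximal chain from the bottom. -/
noncomputable def ht {α : Type*} [Preorder α] (x : α) : ℕ := (Order.height x).toNat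

section HtLemmas

variable {α : Type*} [Lattice α] [Fintype α]

lemma height_lt_top (x : α) : Order.height x < ⊤ := by
  refine lt_of_le_of_lt (Order.height_le fun p _ => ?_) (ENat.coe_lt_top (Fintype.card α))
  exact_mod_cast p.length_lt_card.le

lemma ht_coe (x : α) : (ht x : ℕ∞) = Order.height x :=
  ENat.coe_toNat (height_lt_top x).ne

lemma ht_lt_ht_of_lt {x y : α} (h : x < y) : ht x < ht y := by
  have := Order.height_strictMono h (height_lt_top x)
  rw [← ht_coe, ← ht_coe] at this
  exact_mod_cast this

lemma ht_le_ht_of_le {x y : α} (h : x ≤ y) : ht x ≤ ht y := by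
  have := Order.height_mono h
  rw [← ht_coe, ← ht_coe] at this
  exact_mod_cast this

lemma eq_of_le_of_ht_le {x y : α} (h : x ≤ y) (hh : ht y ≤ ht x) : x = y := by
  rcases h.lt_or_eq with h' | h'
  · exact absurd (ht_lt_ht_of_lt h') (by omega)
  · exact h'

lemma covBy_of_lt_of_ht {x y : α} (h : x < y) (hh : ht y = ht x + 1) : x ⋖ y := by
  refine ⟨h, fun c hxc hcy => ?_⟩
  have := ht_lt_ht_of_lt hxc
  have := ht_lt_ht_of_lt hcy
  omega

lemma exists_lt_ht_eq {x : α} {n : ℕ} (h : n < ht x) : ∃ y < x, ht y = n := by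
  have h' : (n : ℕ∞) < Order.height x := by
    rw [← ht_coe]; exact_mod_cast h
  obtain ⟨y, hy, hy'⟩ := (Order.coe_lt_height_iff (height_lt_top x)).mp h'
  exact ⟨y, hy, by rw [← ht_coe] at hy'; exact_mod_cast hy'⟩

variable [IsModularLattice α]

lemma ht_of_covBy : ∀ n : ℕ, ∀ x y : α, x ⋖ y → ht y = n → ht y = ht x + 1 := by
  intro n
  induction n using Nat.strong_induction_on with
  | _ n IH =>
    intro x y hxy hn
    have hxy' : ht x < ht y := ht_lt_ht_of_lt hxy.1
    obtain ⟨z, hzy, hz⟩ := exists_lt_ht_eq (x := y) (n := n - 1) (by omega)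
    have hzcov : z ⋖ y := covBy_of_lt_of_ht hzy (by omega)
    rcases eq_or_ne z x with rfl | hne
    · omega
    · have hsup : x ⊔ z = y := by
        rcases (sup_le hxy.1.le hzy.le).lt_or_eq with h' | h'
        · exfalso
          have hzx : z ≤ x := by
            by_contra hzx
            exact (hxy.2 (le_sup_left.lt_of_ne (by
              intro he; exact hzx (he ▸ le_sup_right))) h')
          rcases hzx.lt_or_eq with h'' | h''
          · exact hzcov.2 h'' hxy.1
          · exact hne h''
        · exact h'
      have hc1 : x ⋖ x ⊔ z := by rw [hsup]; exact hxy
      have hc2 : z ⋖ x ⊔ z := by rw [hsup]; exact hzcov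
      have hinf1 : x ⊓ z ⋖ x := inf_covBy_of_covBy_sup_right hc2
      have hinf2 : x ⊓ z ⋖ z := inf_covBy_of_covBy_sup_left hc1
      have hIH := IH (n - 1) (by omega) (x ⊓ z) z hinf2 hz
      have := ht_lt_ht_of_lt hinf1.1
      omega

lemma ht_covBy {x y : α} (hxy : x ⋖ y) : ht y = ht x + 1 :=
  ht_of_covBy (ht y) x y hxy rfl

lemma exists_covBy_between {a b : α} (hab : a < b) : ∃ c, a ⋖ c ∧ c ≤ b := by
  classical
  set S : Set α := {x | a < x ∧ x ≤ b} with hS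
  have hne : S.Nonempty := ⟨b, hab, le_rfl⟩
  obtain ⟨c, hcS, hmin⟩ : ∃ c ∈ S, ∀ d ∈ S, ht d ≤ ht c → ht c ≤ ht d := by
    obtain ⟨c, hc, h⟩ := exists_minimalFor_of_wellFoundedLT (· ∈ S) ht hne
    exact ⟨c, hc, fun d hd => h hd⟩
  refine ⟨c, ⟨hcS.1, fun d had hdc => ?_⟩, hcS.2⟩
  have hdS : d ∈ S := ⟨had, hdc.le.trans hcS.2⟩
  have := hmin d hdS (ht_lt_ht_of_lt hdc).le
  have := ht_lt_ht_of_lt hdc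
  omega

lemma exists_ht_between : ∀ (d : ℕ) (a b : α), a ≤ b → ht a + d ≤ ht b →
    ∃ x, a ≤ x ∧ x ≤ b ∧ ht x = ht a + d := by
  intro d
  induction d with
  | zero => exact fun a b hab _ => ⟨a, le_rfl, hab, by omega⟩
  | succ d IH =>
    intro a b hab hd
    have hlt : a < b := by
      rcases hab.lt_or_eq with h | rfl
      · exact h
      · omega
    obtain ⟨c, hac, hcb⟩ := exists_covBy_between hlt
    have hc := ht_covBy hac
    obtain ⟨x, h1, h2, h3⟩ := IH c b hcb (by omega)
    exact ⟨x, hac.1.le.trans h1, h2, by omega⟩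

lemma ht_sup_add_ht_inf : ∀ (n : ℕ) (a b : α), ht a = n →
    ht (a ⊔ b) + ht (a ⊓ b) = ht a + ht b := by
  intro n
  induction n using Nat.strong_induction_on with
  | _ n IH =>
    intro a b hn
    by_cases hab : a ≤ b
    · rw [sup_eq_right.mpr hab, inf_eq_left.mpr hab]; omega
    · have hinf : a ⊓ b < a := inf_le_left.lt_of_ne (fun h => hab (h ▸ inf_le_right))
      have hd : ht (a ⊓ b) < ht a := ht_lt_ht_of_lt hinf
      obtain ⟨a', ha'1, ha'2, ha'3⟩ := exists_ht_between (n - 1 - ht (a ⊓ b)) (a ⊓ b) a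
        hinf.le (by omega)
      have ha'ht : ht a' + 1 = ht a := by omega
      have ha'cov : a' ⋖ a := covBy_of_lt_of_ht
        (ha'2.lt_of_ne (fun h => by rw [h] at ha'ht; omega)) (by omega)
      have hinfeq : a' ⊓ b = a ⊓ b := by
        refine le_antisymm (inf_le_inf_right b ha'2) (le_inf ha'1 inf_le_right)
      -- a ⊓ (a' ⊔ b) = a'
      have hkey : a ⊓ (a' ⊔ b) = a' := by
        rw [inf_comm, sup_inf_assoc_of_le b ha'2, inf_comm b a]
        exact sup_eq_left.mpr ha'1
      have hcov2 : a' ⊔ b ⋖ a ⊔ (a' ⊔ b) :=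
        covBy_sup_of_inf_covBy_left (a := a) (b := a' ⊔ b) (by rw [hkey]; exact ha'cov)
      have hsupeq : a ⊔ (a' ⊔ b) = a ⊔ b := by
        rw [← sup_assoc, sup_eq_left.mpr ha'2]
      rw [hsupeq] at hcov2
      have h1 := ht_covBy hcov2
      have hIH := IH (n - 1) (by omega) a' b (by omega)
      rw [hinfeq] at hIH
      omega

lemma ht_modular (a b : α) : ht (a ⊔ b) + ht (a ⊓ b) = ht a + ht b :=
  ht_sup_add_ht_inf (ht a) a b rfl

end HtLemmas

section Main

variable {α : Type*} [Lattice α] [Fintype α] [IsModularLattice α]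

/-- Lemma A: when the meet is high (ht I₁ ≤ ht (I₁ ⊓ I₂) + 1), a single application of
the local augmentation property suffices. -/
lemma lemA (𝓘 : Set α) (hideal : IsLowerSet 𝓘)
    (hloc : ∀ I₁ I₂, I₁ ∈ 𝓘 → I₂ ∈ 𝓘 → ht I₁ + 1 = ht I₂ → I₂ ⋖ I₁ ⊔ I₂ →
        ∃ J ∈ 𝓘, I₁ < J ∧ J ≤ I₁ ⊔ I₂)
    (I₁ I₂ : α) (h1 : I₁ ∈ 𝓘) (h2 : I₂ ∈ 𝓘) (hlt : ht I₁ < ht I₂)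
    (hd : ht I₁ ≤ ht (I₁ ⊓ I₂) + 1) : ∃ J ∈ 𝓘, I₁ < J ∧ J ≤ I₁ ⊔ I₂ := by
  by_cases hle : I₁ ≤ I₂
  · exact ⟨I₂, h2, hle.lt_of_ne (fun h => by rw [h] at hlt; omega), le_sup_right⟩
  · have hinflt : I₁ ⊓ I₂ < I₁ := inf_le_left.lt_of_ne (fun h => hle (h ▸ inf_le_right))
    have hdlt : ht (I₁ ⊓ I₂) < ht I₁ := ht_lt_ht_of_lt hinflt
    -- pick x with I₁ ⊓ I₂ ≤ x ≤ I₂ and ht x = ht I₁ + 1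
    obtain ⟨x, hx1, hx2, hx3⟩ := exists_ht_between (ht I₁ + 1 - ht (I₁ ⊓ I₂)) (I₁ ⊓ I₂) I₂
      inf_le_right (by omega)
    have hxht : ht x = ht I₁ + 1 := by omega
    have hxmem : x ∈ 𝓘 := hideal hx2 h2
    by_cases hI1x : I₁ ≤ x
    · exact ⟨x, hxmem, hI1x.lt_of_ne (fun h => by rw [← h] at hxht; omega),
        hx2.trans le_sup_right⟩
    · have hinfx : I₁ ⊓ x < I₁ := inf_le_left.lt_of_ne (fun h => hI1x (h ▸ inf_le_right))
      have h5 : ht (I₁ ⊓ x) < ht I₁ := ht_lt_ht_of_lt hinfx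
      have h6 : ht (I₁ ⊓ I₂) ≤ ht (I₁ ⊓ x) := ht_le_ht_of_le (le_inf inf_le_left hx1)
      have hmod := ht_modular I₁ x
      have hcov : x ⋖ I₁ ⊔ x := covBy_of_lt_of_ht
        (le_sup_right.lt_of_ne (fun h => hI1x (le_sup_left.trans_eq h.symm))) (by omega)
      obtain ⟨J, hJ1, hJ2, hJ3⟩ := hloc I₁ x h1 hxmem (by omega) hcov
      exact ⟨J, hJ1, hJ2, hJ3.trans (sup_le_sup_left hx2 I₁)⟩

lemma mainInd (𝓘 : Set α) (hideal : IsLowerSet 𝓘)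
    (hloc : ∀ I₁ I₂, I₁ ∈ 𝓘 → I₂ ∈ 𝓘 → ht I₁ + 1 = ht I₂ → I₂ ⋖ I₁ ⊔ I₂ →
        ∃ J ∈ 𝓘, I₁ < J ∧ J ≤ I₁ ⊔ I₂) :
    ∀ m : ℕ, ∀ I₁ I₂, I₁ ∈ 𝓘 → I₂ ∈ 𝓘 → ht I₁ < ht I₂ → ht (I₁ ⊔ I₂) ≤ m →
      ∃ J ∈ 𝓘, I₁ < J ∧ J ≤ I₁ ⊔ I₂ := by
  intro m
  induction m using Nat.strong_induction_on with
  | _ m IH =>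
    intro I₁ I₂ h1 h2 hlt hm
    by_cases hd : ht I₁ ≤ ht (I₁ ⊓ I₂) + 1
    · exact lemA 𝓘 hideal hloc I₁ I₂ h1 h2 hlt hd
    · push_neg at hd
      -- pick I₁' with I₁ ⊓ I₂ ≤ I₁' ≤ I₁, ht I₁' = ht I₁ - 1
      obtain ⟨I₁', hI1'1, hI1'2, hI1'3⟩ := exists_ht_between (ht I₁ - 1 - ht (I₁ ⊓ I₂))
        (I₁ ⊓ I₂) I₁ inf_le_left (by omega)
      have hI1'ht : ht I₁' + 1 = ht I₁ := by omega
      have hI1'mem : I₁' ∈ 𝓘 := hideal hI1'2 h1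
      have hinfeq : I₁' ⊓ I₂ = I₁ ⊓ I₂ :=
        le_antisymm (inf_le_inf_right I₂ hI1'2) (le_inf hI1'1 inf_le_right)
      have hmod := ht_modular I₁ I₂
      have hmod' := ht_modular I₁' I₂
      rw [hinfeq] at hmod'
      have hsub : I₁' ⊔ I₂ ≤ I₁ ⊔ I₂ := sup_le_sup_right hI1'2 I₂
      have hsubht : ht (I₁' ⊔ I₂) + 1 = ht (I₁ ⊔ I₂) := by omega
      obtain ⟨J', hJ'1, hJ'2, hJ'3⟩ := IH (m - 1) (by omega) I₁' I₂ hI1'mem h2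
        (by omega) (by omega)
      have hJ'ht : ht I₁' < ht J' := ht_lt_ht_of_lt hJ'2
      -- obtain K ∈ 𝓘 with I₁' ≤ K ≤ I₁' ⊔ I₂ and ht I₁ < ht K
      obtain ⟨K, hK1, hK2, hK3, hK4⟩ :
          ∃ K ∈ 𝓘, I₁' ≤ K ∧ K ≤ I₁' ⊔ I₂ ∧ ht I₁ < ht K := by
        by_cases hJ'big : ht I₁ < ht J'
        · exact ⟨J', hJ'1, hJ'2.le, hJ'3, hJ'big⟩
        · have hJ'eq : ht J' = ht I₁ := by omega
          have hJ'sup : J' ⊔ I₂ ≤ I₁' ⊔ I₂ := sup_le hJ'3 le_sup_right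
          obtain ⟨J'', hJ''1, hJ''2, hJ''3⟩ := IH (m - 1) (by omega) J' I₂ hJ'1 h2
            (by omega) (le_trans (ht_le_ht_of_le hJ'sup) (by omega))
          exact ⟨J'', hJ''1, (hJ'2.trans hJ''2).le, hJ''3.trans hJ'sup,
            hJ'eq ▸ ht_lt_ht_of_lt hJ''2⟩
      -- apply Lemma A to (I₁, K)
      have hmeet : ht I₁ ≤ ht (I₁ ⊓ K) + 1 := by
        have : ht I₁' ≤ ht (I₁ ⊓ K) := ht_le_ht_of_le (le_inf hI1'2 hK2)
        omega
      obtain ⟨J, hJ1, hJ2, hJ3⟩ := lemA 𝓘 hideal hloc I₁ K h1 hK1 hK4 hmeet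
      exact ⟨J, hJ1, hJ2, hJ3.trans (sup_le le_sup_left (hK3.trans hsub))⟩

end Main

/-- On a finite modular lattice, the augmentation property is equivalent to its
local version. -/
theorem augmentation_iff_local_augmentation {α : Type*} [Lattice α] [Fintype α]
    [BoundedOrder α] [IsModularLattice α]
    (𝓘 : Set α) (hne : 𝓘.Nonempty) (hideal : IsLowerSet 𝓘) :
    (∀ I₁ I₂, I₁ ∈ 𝓘 → I₂ ∈ 𝓘 → ht I₁ < ht I₂ →
        ∃ J ∈ 𝓘, I₁ < J ∧ J ≤ I₁ ⊔ I₂) ↔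
    (∀ I₁ I₂, I₁ ∈ 𝓘 → I₂ ∈ 𝓘 → ht I₁ + 1 = ht I₂ → I₂ ⋖ I₁ ⊔ I₂ →
        ∃ J ∈ 𝓘, I₁ < J ∧ J ≤ I₁ ⊔ I₂) := by
  constructor
  · intro haug I₁ I₂ h1 h2 hht _
    exact haug I₁ I₂ h1 h2 (by omega)
  · intro hloc I₁ I₂ h1 h2 hlt
    exact mainInd 𝓘 hideal hloc (ht (I₁ ⊔ I₂)) I₁ I₂ h1 h2 hlt le_rfl
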